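/- Let m ≥ 2 and let λ_1 ≥ λ_2 ≥ … ≥ 0 be the nonincreasing rearrangement of a family {a_{k,j} : j = 1,…,d_k^m, k ≥ 0} of nonnegative numbers, where d_k^m ≍ k^{m−1}. If there exists C > 0 such that Σ_{k≥n} Σ_{j=1}^{d_k^m} a_{k,j} ≤ C n^{−β} for all n ≥ 1, and the a_{k,j} are nonincreasing in k (a_{n,j} ≤ a_{k,l} whenever n ≥ k), then λ_n = O(n^{−1−β/m}) as n → ∞. -/

import Mathlib

/-- Let `m ≥ 2` and let `λ` be the nonincreasing rearrangement (realized
by a bijection `e`) of a family `{a_{k,j} : j < d k, k ≥ 0}` of nonnegative numbers with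
`d k ≍ k^{m−1}`.  If `Σ_{k≥n} Σ_j a_{k,j} ≤ C n^{−β}` for all `n ≥ 1` and the `a_{k,j}`
are nonincreasing in `k`, then `λ_n = O(n^{−1−β/m})`. -/
theorem eigenvalue_rearrangement_decay
    (m : ℕ) (hm : 2 ≤ m) (d : ℕ → ℕ)
    (c₁ c₂ : ℝ) (hc₁ : 0 < c₁) (hc₂ : 0 < c₂)
    (hd : ∀ k : ℕ, 1 ≤ k → c₁ * (k : ℝ) ^ (m - 1) ≤ (d k : ℝ) ∧
      (d k : ℝ) ≤ c₂ * (k : ℝ) ^ (m - 1))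
    (a : (k : ℕ) → Fin (d k) → ℝ) (ha : ∀ k j, 0 ≤ a k j)
    (hamono : ∀ (k n : ℕ), k ≤ n → ∀ (j : Fin (d n)) (l : Fin (d k)), a n j ≤ a k l)
    (hsum : Summable fun i : Σ k : ℕ, Fin (d k) => a i.1 i.2)
    (β C : ℝ) (hβ : 0 < β) (hC : 0 < C)
    (htail : ∀ n : ℕ, 1 ≤ n →
      (∑' p : {p : Σ k : ℕ, Fin (d k) // n ≤ p.1}, a p.1.1 p.1.2) ≤ C * (n : ℝ) ^ (-β))
    (lam : ℕ → ℝ) (hlam_mono : Antitone lam)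
    (e : ℕ ≃ Σ k : ℕ, Fin (d k)) (hlam : ∀ n : ℕ, lam n = a (e n).1 (e n).2) :
    ∃ C' > 0, ∀ n : ℕ, 1 ≤ n → lam n ≤ C' * (n : ℝ) ^ (-(1 + β / m)) := by
  classical
  have hlam_nonneg : ∀ n, 0 ≤ lam n := fun n => (hlam n) ▸ ha _ _
  have hm0 : (0:ℝ) < (m:ℝ) := by
    have : 0 < m := by omega
    exact_mod_cast this
  set N : ℕ → ℕ := fun K => ∑ k ∈ Finset.range K, d k with hN
  -- counting: at most `N K` indices can be mapped to rows `< K`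
  have hcount : ∀ K M : ℕ,
      ((Finset.range M).filter (fun i => (e i).1 < K)).card ≤ N K := by
    intro K M
    have h1 : ((Finset.range M).filter (fun i => (e i).1 < K)).card
        ≤ ((Finset.range K).sigma (fun k => (Finset.univ : Finset (Fin (d k))))).card := by
      apply Finset.card_le_card_of_injOn (fun i => e i)
      · intro i hi
        rw [Finset.mem_coe, Finset.mem_filter] at hi
        rw [Finset.mem_coe, Finset.mem_sigma]
        exact ⟨Finset.mem_range.2 hi.2, Finset.mem_univ _⟩
      · intro i _ j _ h
        exact e.injective h
    simpa [Finset.card_sigma, hN] using h1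
  -- main estimate
  have hmain : ∀ K M : ℕ, 1 ≤ K →
      ((M + 1 : ℝ) - N K) * lam M ≤ C * (K : ℝ) ^ (-β) := by
    intro K M hK
    set T := (Finset.range (M+1)).filter (fun i => K ≤ (e i).1) with hT
    have hTcard : ((M + 1 : ℝ) - N K) ≤ (T.card : ℝ) := by
      have hsplit := Finset.card_filter_add_card_filter_not
        (s := Finset.range (M+1)) (p := fun i => K ≤ (e i).1)
      have hneg : (Finset.range (M+1)).filter (fun i => ¬ K ≤ (e i).1)
          = (Finset.range (M+1)).filter (fun i => (e i).1 < K) := by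
        simp [not_le]
      rw [hneg, Finset.card_range] at hsplit
      have h2 := hcount K (M+1)
      have h3 : T.card + ((Finset.range (M+1)).filter (fun i => (e i).1 < K)).card = M + 1 := hsplit
      have h4 : (T.card : ℝ) + ((Finset.range (M+1)).filter (fun i => (e i).1 < K)).card = (M:ℝ) + 1 := by
        exact_mod_cast h3
      have h5 : (((Finset.range (M+1)).filter (fun i => (e i).1 < K)).card : ℝ) ≤ (N K : ℝ) := by
        exact_mod_cast h2
      linarith
    have hmono' : ∀ i ∈ T, lam M ≤ lam i := by
      intro i hi
      rw [hT, Finset.mem_filter, Finset.mem_range] at hi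
      exact hlam_mono (Nat.lt_succ_iff.mp hi.1)
    have h2 : (T.card : ℝ) * lam M ≤ ∑ i ∈ T, lam i := by
      have := Finset.card_nsmul_le_sum T lam (lam M) hmono'
      simpa [nsmul_eq_mul] using this
    have hsub : Summable (fun p : {p : Σ k : ℕ, Fin (d k) // K ≤ p.1} => a p.1.1 p.1.2) :=
      hsum.subtype {p : Σ k : ℕ, Fin (d k) | K ≤ p.1}
    have hg : ∀ x : {x // x ∈ T}, K ≤ (e x.1).1 := by
      intro x
      exact (Finset.mem_filter.1 x.2).2
    have h3 : ∑ i ∈ T, lam i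
        ≤ ∑' p : {p : Σ k : ℕ, Fin (d k) // K ≤ p.1}, a p.1.1 p.1.2 := by
      set g : {x // x ∈ T} → {p : Σ k : ℕ, Fin (d k) // K ≤ p.1} :=
        fun x => ⟨e x.1, hg x⟩ with hgdef
      have hginj : ∀ x ∈ T.attach, ∀ y ∈ T.attach, g x = g y → x = y := by
        intro x _ y _ h
        have h' : e x.1 = e y.1 := congrArg Subtype.val h
        exact Subtype.ext (e.injective h')
      have heq : ∑ i ∈ T, lam i
          = ∑ p ∈ T.attach.image g, a p.1.1 p.1.2 := by
        rw [Finset.sum_image hginj]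
        rw [← Finset.sum_attach T lam]
        apply Finset.sum_congr rfl
        intro x _
        rw [hlam]
      rw [heq]
      exact hsub.sum_le_tsum _ (fun p _ => ha _ _)
    calc ((M + 1 : ℝ) - N K) * lam M ≤ (T.card : ℝ) * lam M :=
          mul_le_mul_of_nonneg_right hTcard (hlam_nonneg M)
      _ ≤ ∑ i ∈ T, lam i := h2
      _ ≤ ∑' p : {p : Σ k : ℕ, Fin (d k) // K ≤ p.1}, a p.1.1 p.1.2 := h3
      _ ≤ C * (K : ℝ) ^ (-β) := htail K hK
  -- bound for N K
  set A : ℝ := 2 * ((d 0 : ℝ) + c₂) with hA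
  have hA0 : 0 < A := by positivity
  have hNK : ∀ K : ℕ, 1 ≤ K → (N K : ℝ) ≤ ((d 0:ℝ) + c₂) * (K:ℝ)^m := by
    intro K hK
    have hcast : (N K : ℝ) = ∑ k ∈ Finset.range K, (d k : ℝ) := by
      simp [hN]
    have hK0 : 0 < K := hK
    rw [hcast, Finset.range_eq_Ico, Finset.sum_eq_sum_Ico_succ_bot hK0]
    have hbd : ∀ k ∈ Finset.Ico 1 K, (d k : ℝ) ≤ c₂ * (K:ℝ)^(m-1) := by
      intro k hk
      rw [Finset.mem_Ico] at hk
      refine le_trans (hd k hk.1).2 ?_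
      have hkK : (k:ℝ) ≤ (K:ℝ) := by exact_mod_cast hk.2.le
      have hpow : (k:ℝ)^(m-1) ≤ (K:ℝ)^(m-1) :=
        pow_le_pow_left₀ (by positivity) hkK _
      nlinarith
    have hsum2 : ∑ k ∈ Finset.Ico 1 K, (d k:ℝ) ≤ ((K - 1 : ℕ) : ℝ) * (c₂ * (K:ℝ)^(m-1)) := by
      have := Finset.sum_le_card_nsmul (Finset.Ico 1 K) _ _ hbd
      simpa [Nat.card_Ico, nsmul_eq_mul] using this
    have hK1R : ((K - 1 : ℕ) : ℝ) ≤ (K:ℝ) := by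
      have : (K - 1 : ℕ) ≤ K := Nat.sub_le _ _
      exact_mod_cast this
    have hKpow : (K:ℝ)^(m-1) * (K:ℝ) = (K:ℝ)^m := by
      rw [← pow_succ]
      congr 1
      omega
    have hKm1 : (1:ℝ) ≤ (K:ℝ)^m := by
      have : (1:ℝ) ≤ (K:ℝ) := by exact_mod_cast hK
      exact one_le_pow₀ this
    have hKpownn : (0:ℝ) ≤ (K:ℝ)^(m-1) := by positivity
    nlinarith [mul_le_mul_of_nonneg_right hK1R (mul_nonneg hc₂.le hKpownn)]
  -- quantitative decay for large M
  have hkey : ∀ M : ℕ, A * 2^m ≤ (M:ℝ) →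
      lam M ≤ (2 * C * (2:ℝ)^β * A^(β/(m:ℝ))) * (M:ℝ)^(-(1+β/(m:ℝ))) := by
    intro M hM
    have hMpos : (0:ℝ) < M := lt_of_lt_of_le (by positivity) hM
    set x : ℝ := ((M:ℝ)/A) ^ ((1:ℝ)/(m:ℝ)) with hx
    have hMA : (2:ℝ)^m ≤ (M:ℝ)/A := (le_div_iff₀ hA0).2 (by linarith [hM])
    have hx2 : (2:ℝ) ≤ x := by
      have h1 : ((2:ℝ)^m) ^ ((1:ℝ)/(m:ℝ)) ≤ x :=
        Real.rpow_le_rpow (by positivity) hMA (by positivity)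
      have h0 : ((2:ℝ)^m) ^ ((1:ℝ)/(m:ℝ)) = 2 := by
        rw [← Real.rpow_natCast 2 m, ← Real.rpow_mul (by norm_num)]
        rw [mul_one_div, div_self (ne_of_gt hm0), Real.rpow_one]
      linarith
    set K := ⌊x⌋₊ with hKdef
    have hxpos : 0 < x := by linarith
    have hK1 : 1 ≤ K := Nat.le_floor (by push_cast; linarith)
    have hKle : (K:ℝ) ≤ x := Nat.floor_le hxpos.le
    have hKge : x / 2 ≤ (K:ℝ) := by
      have := Nat.lt_floor_add_one x
      linarith
    have hKpos : (0:ℝ) < (K:ℝ) := by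
      have : (0:ℕ) < K := hK1
      exact_mod_cast this
    have hKm : (K:ℝ)^m ≤ (M:ℝ)/A := by
      have h1 : (K:ℝ)^m ≤ x^m := pow_le_pow_left₀ (by positivity) hKle m
      have h2 : x^m = (M:ℝ)/A := by
        rw [hx, ← Real.rpow_natCast (((M:ℝ)/A) ^ ((1:ℝ)/(m:ℝ))) m,
          ← Real.rpow_mul (by positivity)]
        rw [one_div, inv_mul_cancel₀ (ne_of_gt hm0), Real.rpow_one]
      linarith
    have hNle : (N K : ℝ) ≤ (M:ℝ)/2 := by
      have h1 := hNK K hK1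
      have h2 : ((d 0:ℝ) + c₂) * (K:ℝ)^m ≤ ((d 0:ℝ)+c₂) * ((M:ℝ)/A) :=
        mul_le_mul_of_nonneg_left hKm (by positivity)
      have h3 : ((d 0:ℝ)+c₂) * ((M:ℝ)/A) = (M:ℝ)/2 := by
        rw [hA]
        field_simp
      linarith
    have hmain' := hmain K M hK1
    have hhalf : (M:ℝ)/2 * lam M ≤ C * (K:ℝ)^(-β) := by
      have h1 : (M:ℝ)/2 ≤ (M+1:ℝ) - N K := by push_cast; linarith
      calc (M:ℝ)/2 * lam M ≤ ((M+1:ℝ) - N K) * lam M :=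
            mul_le_mul_of_nonneg_right h1 (hlam_nonneg M)
        _ ≤ _ := hmain'
    have hlamM : lam M ≤ C * (K:ℝ)^(-β) * 2 / M := by
      rw [le_div_iff₀ hMpos]
      nlinarith [hhalf]
    -- bound K^{-β} by powers of M
    have hKb : (K:ℝ)^(-β) ≤ (2:ℝ)^β * (A^(β/(m:ℝ)) * (M:ℝ)^(-(β/(m:ℝ)))) := by
      have h1 : (K:ℝ)^(-β) ≤ (x/2)^(-β) :=
        Real.rpow_le_rpow_of_nonpos (by linarith) hKge (by linarith)
      have h2 : (x/2)^(-β) = (2:ℝ)^β * x^(-β) := by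
        rw [Real.div_rpow hxpos.le (by norm_num : (0:ℝ) ≤ 2), Real.rpow_neg (by norm_num : (0:ℝ) ≤ 2)]
        field_simp
      have h3 : x^(-β) = A^(β/(m:ℝ)) * (M:ℝ)^(-(β/(m:ℝ))) := by
        rw [hx, ← Real.rpow_mul (by positivity)]
        rw [show (1:ℝ)/(m:ℝ) * (-β) = -(β/(m:ℝ)) by field_simp]
        rw [Real.div_rpow hMpos.le hA0.le, Real.rpow_neg hA0.le]
        field_simp
      rw [h2, h3] at h1
      linarith [h1]
    have hMsplit : (M:ℝ)^(-(1+β/(m:ℝ))) = (M:ℝ)^(-(β/(m:ℝ))) / M := by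
      rw [show -(1+β/(m:ℝ)) = (-(β/(m:ℝ))) + (-1) by ring, Real.rpow_add hMpos,
        Real.rpow_neg_one]
      exact (div_eq_mul_inv _ _).symm
    calc lam M ≤ C * (K:ℝ)^(-β) * 2 / M := hlamM
      _ ≤ C * ((2:ℝ)^β * (A^(β/(m:ℝ)) * (M:ℝ)^(-(β/(m:ℝ))))) * 2 / M := by
          gcongr
      _ = (2 * C * (2:ℝ)^β * A^(β/(m:ℝ))) * (M:ℝ)^(-(1+β/(m:ℝ))) := by
          rw [hMsplit]
          ring
  -- assemble the constant
  set γ : ℝ := 1 + β/(m:ℝ) with hγ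
  have hγpos : 0 < γ := by positivity
  set M₀ : ℕ := ⌈A * 2^m⌉₊ + 1 with hM₀
  have hM₀pos : (0:ℝ) < (M₀:ℝ) := by positivity
  set C₂ : ℝ := 2 * C * (2:ℝ)^β * A^(β/(m:ℝ)) with hC₂
  have hC₂pos : 0 < C₂ := by positivity
  have hM₀γpos : (0:ℝ) < (M₀:ℝ)^γ := Real.rpow_pos_of_pos hM₀pos γ
  have hCpos : 0 < C₂ + (lam 1 + 1) * (M₀:ℝ)^γ := by
    have : 0 < (lam 1 + 1) * (M₀:ℝ)^γ :=
      mul_pos (by linarith [hlam_nonneg 1]) hM₀γpos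
    linarith
  refine ⟨C₂ + (lam 1 + 1) * (M₀:ℝ)^γ, hCpos, ?_⟩
  intro n hn
  have hnpos : (0:ℝ) < (n:ℝ) := by exact_mod_cast hn
  have hnγpos : (0:ℝ) < (n:ℝ)^(-γ) := Real.rpow_pos_of_pos hnpos (-γ)
  by_cases hcase : M₀ ≤ n
  · have hA2 : A * 2^m ≤ (n:ℝ) := by
      have h1 : A * 2^m ≤ (⌈A*2^m⌉₊ : ℝ) := Nat.le_ceil _
      have h2 : ((⌈A*2^m⌉₊ : ℕ):ℝ) ≤ (n:ℝ) := by
        exact_mod_cast le_trans (Nat.le_succ _) hcase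
      linarith
    have hk := hkey n hA2
    have h3 : 0 ≤ (lam 1 + 1) * (M₀:ℝ)^γ :=
      le_of_lt (mul_pos (by linarith [hlam_nonneg 1]) hM₀γpos)
    have hsplit : (C₂ + (lam 1 + 1) * (M₀:ℝ)^γ) * (n:ℝ)^(-γ)
        = C₂ * (n:ℝ)^(-γ) + ((lam 1 + 1) * (M₀:ℝ)^γ) * (n:ℝ)^(-γ) := by ring
    rw [hsplit]
    linarith [mul_nonneg h3 hnγpos.le]
  · push_neg at hcase
    have h1 : (n:ℝ)^γ ≤ (M₀:ℝ)^γ :=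
      Real.rpow_le_rpow hnpos.le (by exact_mod_cast hcase.le) hγpos.le
    have h2 : (n:ℝ)^γ * (n:ℝ)^(-γ) = 1 := by
      rw [← Real.rpow_add hnpos]
      simp
    have h3 : (1:ℝ) ≤ (M₀:ℝ)^γ * (n:ℝ)^(-γ) := by
      have := mul_le_mul_of_nonneg_right h1 hnγpos.le
      rw [h2] at this
      linarith
    have h4 : lam n ≤ lam 1 := hlam_mono hn
    have h5 : (lam 1 + 1) * 1 ≤ (lam 1 + 1) * ((M₀:ℝ)^γ * (n:ℝ)^(-γ)) :=
      mul_le_mul_of_nonneg_left h3 (by linarith [hlam_nonneg 1])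
    have hsplit : (C₂ + (lam 1 + 1) * (M₀:ℝ)^γ) * (n:ℝ)^(-γ)
        = C₂ * (n:ℝ)^(-γ) + (lam 1 + 1) * ((M₀:ℝ)^γ * (n:ℝ)^(-γ)) := by ring
    rw [hsplit]
    linarith [mul_pos hC₂pos hnγpos]
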